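/- Let S = {1,…,m} be a finite set, q a pmf on S with q(i) > 0 for all i, d > 0, X ⊆ ℝⁿ, and f : X × S → ℝ. Let A = { pmf p : p(i)/q(i) ≤ 1+d for all i } and define d̃(x, i, λ_i, ν) as: ν if λ_i = 0 and f(x,i) ≤ ν; (1+d)·λ_i·exp((f(x,i) − λ_i − ν)/λ_i) + ν if λ_i > 0; +∞ if λ_i = 0 and f(x,i) > ν. Then a point x* ∈ X minimizes x ↦ max_{p ∈ A} Σ_{i∈S} p(i)·f(x,i) over X if and only if x* minimizes x ↦ inf_{λ ∈ (ℝ≥0)^m, ν ∈ ℝ} Σ_{i∈S} q(i)·d̃(x, i, λ_i, ν) over X. -/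

import Mathlib

/-- The extended-real-valued dual integrand `d̃` of the paper. -/
noncomputable def dualIntegrand (d b l ν : ℝ) : EReal :=
  if l = 0 then (if b ≤ ν then ((ν : ℝ) : EReal) else ⊤)
  else (((1 + d) * l * Real.exp ((b - l - ν) / l) + ν : ℝ) : EReal)


lemma ereal_coe_sum {α : Type*} (s : Finset α) (g : α → ℝ) :
    ((∑ i ∈ s, g i : ℝ) : EReal) = ∑ i ∈ s, ((g i : ℝ) : EReal) := by
  classical
  induction s using Finset.induction_on with
  | empty => simp
  | insert _ _ h ih => simp [Finset.sum_insert h, EReal.coe_add, ih]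

lemma dualIntegrand_lower (d b l ν : ℝ) (hd : 0 < d) (hl : 0 ≤ l) :
    ((ν + (1 + d) * max (b - ν) 0 : ℝ) : EReal) ≤ dualIntegrand d b l ν := by
  unfold dualIntegrand
  split_ifs with h1 h2
  · rw [EReal.coe_le_coe_iff]
    have : max (b - ν) 0 = 0 := max_eq_right (by linarith)
    rw [this]; ring_nf; rfl
  · exact le_top
  · rw [EReal.coe_le_coe_iff]
    have hl' : 0 < l := lt_of_le_of_ne hl (Ne.symm h1)
    have hexp : b - ν ≤ l * Real.exp ((b - l - ν) / l) := by
      have h := Real.add_one_le_exp ((b - l - ν) / l)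
      have := mul_le_mul_of_nonneg_left h (le_of_lt hl')
      calc b - ν = l * ((b - l - ν)/l + 1) := by field_simp; ring
        _ ≤ l * Real.exp ((b - l - ν) / l) := this
    have hpos : 0 ≤ l * Real.exp ((b - l - ν) / l) :=
      mul_nonneg hl (Real.exp_nonneg _)
    have hmax : max (b - ν) 0 ≤ l * Real.exp ((b - l - ν) / l) := max_le hexp hpos
    nlinarith [hmax, hd]

lemma dualIntegrand_attain (d b ν : ℝ) :
    dualIntegrand d b (max (b - ν) 0) ν = ((ν + (1 + d) * max (b - ν) 0 : ℝ) : EReal) := by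
  unfold dualIntegrand
  rcases le_or_gt b ν with h | h
  · have : max (b - ν) 0 = 0 := max_eq_right (by linarith)
    simp [this, h]
  · have hm : max (b - ν) 0 = b - ν := max_eq_left (by linarith)
    have hne : max (b - ν) 0 ≠ 0 := by rw [hm]; linarith
    rw [if_neg hne, hm]
    have : (b - (b - ν) - ν) / (b - ν) = 0 := by simp
    rw [this, Real.exp_zero]
    norm_num [add_comm]

open Finset

lemma exists_opt (m : ℕ) (q : Fin m → ℝ) (hq0 : ∀ i, 0 < q i) (hq1 : ∑ i, q i = 1)
    (d : ℝ) (hd : 0 < d) (b : Fin m → ℝ) (hm : 0 < m) :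
    ∃ (ν : ℝ) (p : Fin m → ℝ), (∀ i, 0 ≤ p i) ∧ (∑ i, p i = 1) ∧
      (∀ i, p i / q i ≤ 1 + d) ∧
      ν + (1 + d) * ∑ i, q i * max (b i - ν) 0 ≤ ∑ i, p i * b i := by
  classical
  haveI : Nonempty (Fin m) := ⟨⟨0, hm⟩⟩
  set C : Finset (Fin m) :=
    univ.filter (fun j => ∑ i ∈ univ.filter (fun i => b j < b i), (1 + d) * q i ≤ 1) with hC
  have hCne : C.Nonempty := by
    obtain ⟨j0, _, hj0⟩ := Finset.exists_max_image univ b univ_nonempty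
    refine ⟨j0, ?_⟩
    rw [hC, mem_filter]
    refine ⟨mem_univ _, ?_⟩
    have : univ.filter (fun i => b j0 < b i) = ∅ := by
      rw [filter_eq_empty_iff]
      intro i _
      exact not_lt.2 (hj0 i (mem_univ i))
    rw [this]; simp
  obtain ⟨js, hjsC, hjsmin⟩ := Finset.exists_min_image C b hCne
  set ν := b js with hν
  set T : Finset (Fin m) := univ.filter (fun i => ν < b i) with hT
  set E : Finset (Fin m) := univ.filter (fun i => b i = ν) with hE
  set L : Finset (Fin m) := univ.filter (fun i => b i < ν) with hL
  have hjsE : js ∈ E := by rw [hE, mem_filter]; exact ⟨mem_univ _, rfl⟩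
  have hs : ∑ i ∈ T, (1 + d) * q i ≤ 1 := by
    rw [hC, mem_filter] at hjsC; exact hjsC.2
  set QE : ℝ := ∑ i ∈ E, (1 + d) * q i with hQE
  have hQEpos : 0 < QE :=
    Finset.sum_pos' (fun i _ => le_of_lt (by nlinarith [hq0 i])) ⟨js, hjsE, by nlinarith [hq0 js]⟩
  -- partition of the full sum
  have hsplit : ∀ g : Fin m → ℝ,
      ∑ i, g i = ∑ i ∈ T, g i + ∑ i ∈ E, g i + ∑ i ∈ L, g i := by
    intro g
    have h1 := Finset.sum_filter_add_sum_filter_not univ (fun i => ν < b i) g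
    have h2 := Finset.sum_filter_add_sum_filter_not
      (univ.filter (fun i => ¬ ν < b i)) (fun i => b i = ν) g
    have hE' : (univ.filter (fun i => ¬ ν < b i)).filter (fun i => b i = ν) = E := by
      ext i
      simp only [hE, mem_filter, mem_univ, true_and]
      constructor
      · rintro ⟨_, h⟩; exact h
      · intro h; exact ⟨by rw [h]; exact lt_irrefl ν, h⟩
    have hL' : (univ.filter (fun i => ¬ ν < b i)).filter (fun i => ¬ b i = ν) = L := by
      ext i
      simp only [hL, mem_filter, mem_univ, true_and]
      constructor
      · rintro ⟨h1', h2'⟩; rcases lt_or_eq_of_le (not_lt.1 h1') with h | h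
        · exact h
        · exact absurd h h2'
      · intro h; exact ⟨not_lt.2 (le_of_lt h), ne_of_lt h⟩
    rw [hE', hL'] at h2
    rw [← h1, ← h2, hT]
    ring
  have hge : 1 ≤ ∑ i ∈ T, (1 + d) * q i + QE := by
    by_contra hlt
    push_neg at hlt
    have htot : ∑ i, (1 + d) * q i = 1 + d := by
      rw [← Finset.mul_sum, hq1, mul_one]
    have hLsum : 0 < ∑ i ∈ L, (1 + d) * q i := by
      have := hsplit (fun i => (1 + d) * q i)
      rw [htot] at this
      nlinarith
    have hLne : L.Nonempty := by
      by_contra h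
      rw [Finset.not_nonempty_iff_eq_empty] at h
      rw [h] at hLsum; simp at hLsum
    obtain ⟨j', hj'L, hj'max⟩ := Finset.exists_max_image L b hLne
    have hj'lt : b j' < ν := by rw [hL, mem_filter] at hj'L; exact hj'L.2
    have hfilter : univ.filter (fun i => b j' < b i) = T ∪ E := by
      ext i
      simp only [mem_filter, mem_univ, true_and, mem_union, hT, hE]
      constructor
      · intro h
        rcases lt_trichotomy (b i) ν with h1 | h1 | h1
        · exfalso
          have : i ∈ L := by rw [hL, mem_filter]; exact ⟨mem_univ _, h1⟩
          exact absurd h (not_lt.2 (hj'max i this))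
        · right; exact h1
        · left; exact h1
      · rintro (h | h)
        · exact lt_trans hj'lt h
        · rw [h]; exact hj'lt
    have hdisj : Disjoint T E := by
      rw [Finset.disjoint_left]
      intro i hiT hiE
      rw [hT, mem_filter] at hiT; rw [hE, mem_filter] at hiE
      exact absurd hiE.2 (ne_of_gt hiT.2)
    have hj'C : j' ∈ C := by
      rw [hC, mem_filter]
      refine ⟨mem_univ _, ?_⟩
      rw [hfilter, Finset.sum_union hdisj]
      exact le_of_lt hlt
    exact absurd (hjsmin j' hj'C) (not_le.2 hj'lt)
  set r : ℝ := 1 - ∑ i ∈ T, (1 + d) * q i with hr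
  have hr0 : 0 ≤ r := by rw [hr]; linarith
  have hrQE : r ≤ QE := by rw [hr]; linarith
  set p : Fin m → ℝ := fun i =>
    if ν < b i then (1 + d) * q i else if b i = ν then r * ((1 + d) * q i) / QE else 0 with hp
  have hpT : ∀ i ∈ T, p i = (1 + d) * q i := by
    intro i hi; rw [hT, mem_filter] at hi; simp only [hp]; rw [if_pos hi.2]
  have hpE : ∀ i ∈ E, p i = r * ((1 + d) * q i) / QE := by
    intro i hi; rw [hE, mem_filter] at hi
    simp only [hp]
    rw [if_neg (by rw [hi.2]; exact lt_irrefl ν), if_pos hi.2]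
  have hpL : ∀ i ∈ L, p i = 0 := by
    intro i hi; rw [hL, mem_filter] at hi
    simp only [hp]
    rw [if_neg (not_lt.2 (le_of_lt hi.2)), if_neg (ne_of_lt hi.2)]
  have hpnn : ∀ i, 0 ≤ p i := by
    intro i
    simp only [hp]
    split_ifs
    · nlinarith [hq0 i]
    · exact div_nonneg (mul_nonneg hr0 (by nlinarith [hq0 i])) (le_of_lt hQEpos)
    · exact le_refl 0
  have hpsum : ∑ i, p i = 1 := by
    rw [hsplit p]
    have h1 : ∑ i ∈ T, p i = ∑ i ∈ T, (1 + d) * q i := Finset.sum_congr rfl hpT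
    have h2 : ∑ i ∈ E, p i = r := by
      rw [Finset.sum_congr rfl hpE]
      have : ∑ i ∈ E, r * ((1 + d) * q i) / QE = (∑ i ∈ E, (1 + d) * q i) * (r / QE) := by
        rw [Finset.sum_mul]
        exact Finset.sum_congr rfl (fun i _ => by ring)
      rw [this, ← hQE]
      field_simp
    have h3 : ∑ i ∈ L, p i = 0 := Finset.sum_eq_zero hpL
    rw [h1, h2, h3, hr]
    ring
  have hple : ∀ i, p i ≤ (1 + d) * q i := by
    intro i
    simp only [hp]
    split_ifs
    · exact le_refl _
    · rw [div_le_iff₀ hQEpos]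
      nlinarith [hq0 i, mul_le_mul_of_nonneg_right hrQE (le_of_lt (mul_pos (by linarith : (0:ℝ) < 1 + d) (hq0 i)))]
    · nlinarith [hq0 i]
  have hpdiv : ∀ i, p i / q i ≤ 1 + d := by
    intro i
    rw [div_le_iff₀ (hq0 i)]
    exact hple i
  refine ⟨ν, p, hpnn, hpsum, hpdiv, ?_⟩
  -- final inequality (in fact equality)
  have hmax1 : ∑ i, q i * max (b i - ν) 0 = ∑ i ∈ T, q i * (b i - ν) := by
    rw [← Finset.sum_filter_add_sum_filter_not univ (fun i => ν < b i) (fun i => q i * max (b i - ν) 0), ← hT]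
    have hz : ∑ i ∈ univ.filter (fun i => ¬ ν < b i), q i * max (b i - ν) 0 = 0 := by
      apply Finset.sum_eq_zero
      intro i hi
      rw [mem_filter] at hi
      have : max (b i - ν) 0 = 0 := max_eq_right (by linarith [not_lt.1 hi.2])
      rw [this, mul_zero]
    rw [hz, add_zero]
    apply Finset.sum_congr rfl
    intro i hi
    rw [hT, mem_filter] at hi
    rw [max_eq_left (by linarith [hi.2])]
  have hsum2 : ∑ i, p i * (b i - ν) = ∑ i ∈ T, (1 + d) * q i * (b i - ν) := by
    rw [hsplit (fun i => p i * (b i - ν))]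
    have h2 : ∑ i ∈ E, p i * (b i - ν) = 0 := by
      apply Finset.sum_eq_zero
      intro i hi
      rw [hE, mem_filter] at hi
      rw [hi.2]; ring
    have h3 : ∑ i ∈ L, p i * (b i - ν) = 0 := by
      apply Finset.sum_eq_zero
      intro i hi
      rw [hpL i hi, zero_mul]
    rw [h2, h3, add_zero, add_zero]
    exact Finset.sum_congr rfl (fun i hi => by rw [hpT i hi])
  have hexpand : ∑ i, p i * b i = ∑ i, p i * (b i - ν) + ν := by
    have : ∀ i : Fin m, p i * b i = p i * (b i - ν) + p i * ν := fun i => by ring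
    rw [Finset.sum_congr rfl (fun i _ => this i), Finset.sum_add_distrib, ← Finset.sum_mul, hpsum, one_mul]
  have hfin : (1 + d) * ∑ i ∈ T, q i * (b i - ν) = ∑ i ∈ T, (1 + d) * q i * (b i - ν) := by
    rw [Finset.mul_sum]
    exact Finset.sum_congr rfl (fun i _ => by ring)
  rw [hexpand, hsum2, hmax1, hfin]
  linarith


lemma key_duality (m : ℕ) (q : Fin m → ℝ) (hq0 : ∀ i, 0 < q i) (hq1 : ∑ i, q i = 1)
    (d : ℝ) (hd : 0 < d) (b : Fin m → ℝ) :
    (⨅ (l : Fin m → ℝ) (_ : ∀ i, 0 ≤ l i) (ν : ℝ),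
        ∑ i, ((q i : EReal) * dualIntegrand d (b i) (l i) ν))
      = ((sSup ((fun p => ∑ i, p i * b i) ''
          {p : Fin m → ℝ | (∀ i, 0 ≤ p i) ∧ ∑ i, p i = 1 ∧ ∀ i, p i / q i ≤ 1 + d}) : ℝ) : EReal) := by
  classical
  rcases Nat.eq_zero_or_pos m with hm | hm
  · subst hm; simp at hq1
  set A : Set (Fin m → ℝ) :=
    {p : Fin m → ℝ | (∀ i, 0 ≤ p i) ∧ ∑ i, p i = 1 ∧ ∀ i, p i / q i ≤ 1 + d} with hA
  set S : Set ℝ := (fun p => ∑ i, p i * b i) '' A with hS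
  have hqA : q ∈ A := by
    refine ⟨fun i => le_of_lt (hq0 i), hq1, fun i => ?_⟩
    rw [div_self (ne_of_gt (hq0 i))]; linarith
  have hSne : S.Nonempty := ⟨_, ⟨q, hqA, rfl⟩⟩
  set Hreal : ℝ → ℝ := fun ν => ν + (1 + d) * ∑ i, q i * max (b i - ν) 0 with hHreal
  have hub : ∀ ν, ∀ p ∈ A, ∑ i, p i * b i ≤ Hreal ν := by
    intro ν p hp
    obtain ⟨hp0, hp1, hpd⟩ := hp
    have hple : ∀ i, p i ≤ (1 + d) * q i := fun i => by
      have := hpd i; rw [div_le_iff₀ (hq0 i)] at this; exact this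
    have hkey : ∑ i, p i * (b i - ν) ≤ (1 + d) * ∑ i, q i * max (b i - ν) 0 := by
      rw [Finset.mul_sum]
      apply Finset.sum_le_sum
      intro i _
      rcases le_or_gt (b i) ν with h | h
      · have h1 : max (b i - ν) 0 = 0 := max_eq_right (by linarith)
        rw [h1]
        nlinarith [hp0 i]
      · rw [max_eq_left (by linarith : (0:ℝ) ≤ b i - ν)]
        nlinarith [mul_le_mul_of_nonneg_right (hple i) (by linarith : (0:ℝ) ≤ b i - ν)]
    have hexp : ∑ i, p i * b i = ∑ i, p i * (b i - ν) + ν := by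
      have h1 : ∀ i : Fin m, p i * b i = p i * (b i - ν) + p i * ν := fun i => by ring
      rw [Finset.sum_congr rfl (fun i _ => h1 i), Finset.sum_add_distrib, ← Finset.sum_mul,
        hp1, one_mul]
    rw [hexp]
    simp only [hHreal]
    linarith
  have hbdd : BddAbove S := ⟨Hreal 0, by rintro y ⟨p, hp, rfl⟩; exact hub 0 p hp⟩
  have Hsum : ∀ ν : ℝ, ∑ i, q i * (ν + (1 + d) * max (b i - ν) 0) = Hreal ν := by
    intro ν
    have h1 : ∀ i : Fin m, q i * (ν + (1 + d) * max (b i - ν) 0)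
        = q i * ν + (1 + d) * (q i * max (b i - ν) 0) := fun i => by ring
    rw [Finset.sum_congr rfl (fun i _ => h1 i), Finset.sum_add_distrib, ← Finset.sum_mul,
      hq1, one_mul, ← Finset.mul_sum, hHreal]
  have hlow : ∀ (ν : ℝ) (l : Fin m → ℝ), (∀ i, 0 ≤ l i) →
      ((Hreal ν : ℝ) : EReal) ≤ ∑ i, ((q i : EReal) * dualIntegrand d (b i) (l i) ν) := by
    intro ν l hl
    rw [← Hsum ν, ereal_coe_sum]
    apply Finset.sum_le_sum
    intro i _
    have hlow' := dualIntegrand_lower d (b i) (l i) ν hd (hl i)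
    unfold dualIntegrand at hlow' ⊢
    split_ifs with h1 h2
    · rw [if_pos h1, if_pos h2] at hlow'
      rw [← EReal.coe_mul, EReal.coe_le_coe_iff]
      exact mul_le_mul_of_nonneg_left (EReal.coe_le_coe_iff.1 hlow') (le_of_lt (hq0 i))
    · rw [EReal.coe_mul_top_of_pos (hq0 i)]
      exact le_top
    · rw [← EReal.coe_mul, EReal.coe_le_coe_iff]
      rw [if_neg h1] at hlow'
      exact mul_le_mul_of_nonneg_left (EReal.coe_le_coe_iff.1 hlow') (le_of_lt (hq0 i))
  have hattain : ∀ ν : ℝ,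
      (⨅ (l : Fin m → ℝ) (_ : ∀ i, 0 ≤ l i) (ν' : ℝ),
        ∑ i, ((q i : EReal) * dualIntegrand d (b i) (l i) ν'))
      ≤ ((Hreal ν : ℝ) : EReal) := by
    intro ν
    have hl0 : ∀ i, 0 ≤ max (b i - ν) 0 := fun i => le_max_right _ _
    refine le_trans (iInf_le_of_le (fun i => max (b i - ν) 0)
      (iInf_le_of_le hl0 (iInf_le _ ν))) (le_of_eq ?_)
    rw [← Hsum ν, ereal_coe_sum]
    apply Finset.sum_congr rfl
    intro i _
    rw [dualIntegrand_attain, ← EReal.coe_mul]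
  apply le_antisymm
  · obtain ⟨ν, p, h1, h2, h3, h4⟩ := exists_opt m q hq0 hq1 d hd b hm
    calc (⨅ (l : Fin m → ℝ) (_ : ∀ i, 0 ≤ l i) (ν' : ℝ),
          ∑ i, ((q i : EReal) * dualIntegrand d (b i) (l i) ν'))
        ≤ ((Hreal ν : ℝ) : EReal) := hattain ν
      _ ≤ ((∑ i, p i * b i : ℝ) : EReal) := EReal.coe_le_coe_iff.2 h4
      _ ≤ ((sSup S : ℝ) : EReal) :=
          EReal.coe_le_coe_iff.2 (le_csSup hbdd ⟨p, ⟨h1, h2, h3⟩, rfl⟩)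
  · refine le_iInf fun l => le_iInf fun hl => le_iInf fun ν => ?_
    refine le_trans ?_ (hlow ν l hl)
    rw [EReal.coe_le_coe_iff]
    apply csSup_le hSne
    rintro y ⟨p, hp, rfl⟩
    exact hub ν p hp


/-- a point `x* ∈ X` minimizes the worst-case (primal) objective
`x ↦ max_{p ∈ A} ∑ i, p i * f x i` over `X` if and only if it minimizes the dual
objective `x ↦ inf_{λ ∈ (ℝ≥0)^m, ν ∈ ℝ} ∑ i, q i * d̃(x, i, λ i, ν)` over `X`. -/
theorem primal_dual_minimizers_coincide
    (n m : ℕ) (q : Fin m → ℝ) (hq0 : ∀ i, 0 < q i) (hq1 : ∑ i, q i = 1)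
    (d : ℝ) (hd : 0 < d)
    (X : Set (Fin n → ℝ)) (f : (Fin n → ℝ) → Fin m → ℝ)
    (xstar : Fin n → ℝ) (hxstar : xstar ∈ X) :
    let A : Set (Fin m → ℝ) :=
      {p | (∀ i, 0 ≤ p i) ∧ ∑ i, p i = 1 ∧ ∀ i, p i / q i ≤ 1 + d}
    let J₁ : (Fin n → ℝ) → ℝ := fun x => sSup ((fun p => ∑ i, p i * f x i) '' A)
    let J₂ : (Fin n → ℝ) → EReal := fun x =>
      ⨅ (l : Fin m → ℝ) (_ : ∀ i, 0 ≤ l i) (ν : ℝ),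
        ∑ i, ((q i : EReal) * dualIntegrand d (f x i) (l i) ν)
    (∀ x ∈ X, J₁ xstar ≤ J₁ x) ↔ (∀ x ∈ X, J₂ xstar ≤ J₂ x) := by
  intro A J₁ J₂
  have hkey : ∀ x, J₂ x = ((J₁ x : ℝ) : EReal) := fun x =>
    key_duality m q hq0 hq1 d hd (f x)
  constructor
  · intro h x hx
    rw [hkey, hkey]
    exact EReal.coe_le_coe_iff.2 (h x hx)
  · intro h x hx
    have := h x hx
    rw [hkey, hkey] at this
    exact EReal.coe_le_coe_iff.1 this
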